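/- Let G be a finite group with subgroups G₁, G₂, G₃, G₄. If G₁ ∩ G₂ is the trivial subgroup, then the Ingleton inequality holds: |G₁|·|G₂|·|G₃₄|·|G₁₂₃|·|G₁₂₄| ≥ |G₁₂|·|G₁₃|·|G₁₄|·|G₂₃|·|G₂₄|. -/

import Mathlib

open Subgroup

private lemma card_eq_relindex_mul_card {G : Type*} [Group G] (A B : Subgroup G) :
    Nat.card A = B.relIndex A * Nat.card (A ⊓ B : Subgroup G) := by
  have h2 : Nat.card (B.subgroupOf A) = Nat.card (A ⊓ B : Subgroup G) := by
    rw [← inf_subgroupOf_right B A]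
    have e := (subgroupOfEquivOfLe (inf_le_right : B ⊓ A ≤ A)).toEquiv
    rw [Nat.card_congr e, inf_comm]
  rw [relIndex, ← h2, Subgroup.index_mul_card]

private lemma card_mul_card_le_card_mul_card_inf {G : Type*} [Group G] [Finite G]
    (H A B : Subgroup G) (hA : A ≤ H) (hB : B ≤ H) :
    Nat.card A * Nat.card B ≤ Nat.card H * Nat.card (A ⊓ B : Subgroup G) := by
  have hArel : Nat.card A = B.relIndex A * Nat.card (A ⊓ B : Subgroup G) :=
    card_eq_relindex_mul_card A B
  have hHrel : Nat.card H = B.relIndex H * Nat.card B := by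
    have := card_eq_relindex_mul_card H B
    rwa [inf_of_le_right hB] at this
  have hne : B.relIndex H ≠ 0 := by
    intro h0
    rw [h0, zero_mul] at hHrel
    exact (Nat.card_pos (α := H)).ne' hHrel
  have hle : B.relIndex A ≤ B.relIndex H := relIndex_le_of_le_right hA hne
  calc Nat.card A * Nat.card B
      = B.relIndex A * Nat.card B * Nat.card (A ⊓ B : Subgroup G) := by rw [hArel]; ring
    _ ≤ B.relIndex H * Nat.card B * Nat.card (A ⊓ B : Subgroup G) :=
        Nat.mul_le_mul_right _ (Nat.mul_le_mul_right _ hle)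
    _ = Nat.card H * Nat.card (A ⊓ B : Subgroup G) := by rw [hHrel]

private lemma card_mul_card_le_of_disjoint {G : Type*} [Group G] [Finite G]
    (H A B : Subgroup G) (hA : A ≤ H) (hB : B ≤ H) (hd : A ⊓ B = ⊥) :
    Nat.card A * Nat.card B ≤ Nat.card H := by
  have key : Nat.card (A × B) ≤ Nat.card H := by
    apply Nat.card_le_card_of_injective
      (fun p : A × B => (⟨(p.1 : G) * p.2, mul_mem (hA p.1.2) (hB p.2.2)⟩ : H))
    rintro ⟨a, b⟩ ⟨a', b'⟩ hab
    have h1 : (a : G) * b = (a' : G) * b' := congrArg Subtype.val hab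
    have h2 : (a' : G)⁻¹ * a = (b' : G) * (b : G)⁻¹ := by
      have := congrArg (fun x => (a' : G)⁻¹ * x * (b : G)⁻¹) h1
      simpa [mul_assoc] using this
    have hmem : ((a' : G)⁻¹ * a) ∈ A ⊓ B := by
      refine ⟨mul_mem (A.inv_mem a'.2) a.2, ?_⟩
      rw [h2]; exact mul_mem b'.2 (B.inv_mem b.2)
    rw [hd, Subgroup.mem_bot] at hmem
    have ha : (a' : G) = a := inv_mul_eq_one.mp hmem
    rw [h2] at hmem
    have hb : (b' : G) = b := mul_inv_eq_one.mp hmem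
    exact Prod.ext (Subtype.ext ha.symm) (Subtype.ext hb.symm)
  simpa [Nat.card_prod] using key

/-- If `G₁ ∩ G₂` is the trivial subgroup, then the Ingleton inequality holds
for `(G₁, G₂, G₃, G₄)`. -/
theorem stmt3 (G : Type*) [Group G] [Finite G] (G₁ G₂ G₃ G₄ : Subgroup G)
    (h : G₁ ⊓ G₂ = ⊥) :
    Nat.card G₁ * Nat.card G₂ * Nat.card (G₃ ⊓ G₄ : Subgroup G) *
        Nat.card (G₁ ⊓ G₂ ⊓ G₃ : Subgroup G) * Nat.card (G₁ ⊓ G₂ ⊓ G₄ : Subgroup G) ≥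
      Nat.card (G₁ ⊓ G₂ : Subgroup G) * Nat.card (G₁ ⊓ G₃ : Subgroup G) *
        Nat.card (G₁ ⊓ G₄ : Subgroup G) * Nat.card (G₂ ⊓ G₃ : Subgroup G) *
        Nat.card (G₂ ⊓ G₄ : Subgroup G) := by
  have h123 : G₁ ⊓ G₂ ⊓ G₃ = ⊥ := le_bot_iff.mp (h ▸ (inf_le_left : G₁ ⊓ G₂ ⊓ G₃ ≤ G₁ ⊓ G₂))
  have h124 : G₁ ⊓ G₂ ⊓ G₄ = ⊥ := le_bot_iff.mp (h ▸ (inf_le_left : G₁ ⊓ G₂ ⊓ G₄ ≤ G₁ ⊓ G₂))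
  have hA : Nat.card (G₁ ⊓ G₃ : Subgroup G) * Nat.card (G₁ ⊓ G₄ : Subgroup G) ≤
      Nat.card G₁ * Nat.card ((G₁ ⊓ G₃) ⊓ (G₁ ⊓ G₄) : Subgroup G) :=
    card_mul_card_le_card_mul_card_inf G₁ _ _ inf_le_left inf_le_left
  have hB : Nat.card (G₂ ⊓ G₃ : Subgroup G) * Nat.card (G₂ ⊓ G₄ : Subgroup G) ≤
      Nat.card G₂ * Nat.card ((G₂ ⊓ G₃) ⊓ (G₂ ⊓ G₄) : Subgroup G) :=
    card_mul_card_le_card_mul_card_inf G₂ _ _ inf_le_left inf_le_left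
  have e1 : (G₁ ⊓ G₃) ⊓ (G₁ ⊓ G₄) = G₁ ⊓ (G₃ ⊓ G₄) := by
    rw [inf_inf_inf_comm, inf_idem]
  have e2 : (G₂ ⊓ G₃) ⊓ (G₂ ⊓ G₄) = G₂ ⊓ (G₃ ⊓ G₄) := by
    rw [inf_inf_inf_comm, inf_idem]
  rw [e1] at hA
  rw [e2] at hB
  have hC : Nat.card (G₁ ⊓ (G₃ ⊓ G₄) : Subgroup G) * Nat.card (G₂ ⊓ (G₃ ⊓ G₄) : Subgroup G) ≤
      Nat.card (G₃ ⊓ G₄ : Subgroup G) := by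
    apply card_mul_card_le_of_disjoint (G₃ ⊓ G₄) _ _ inf_le_right inf_le_right
    refine le_bot_iff.mp ?_
    calc (G₁ ⊓ (G₃ ⊓ G₄)) ⊓ (G₂ ⊓ (G₃ ⊓ G₄)) ≤ G₁ ⊓ G₂ :=
          inf_le_inf inf_le_left inf_le_left
      _ = ⊥ := h
  rw [h123, h124, h, Subgroup.card_bot]
  simp only [mul_one, one_mul]
  calc Nat.card (G₁ ⊓ G₃ : Subgroup G) * Nat.card (G₁ ⊓ G₄ : Subgroup G) *
        Nat.card (G₂ ⊓ G₃ : Subgroup G) * Nat.card (G₂ ⊓ G₄ : Subgroup G)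
      = (Nat.card (G₁ ⊓ G₃ : Subgroup G) * Nat.card (G₁ ⊓ G₄ : Subgroup G)) *
        (Nat.card (G₂ ⊓ G₃ : Subgroup G) * Nat.card (G₂ ⊓ G₄ : Subgroup G)) := by ring
    _ ≤ (Nat.card G₁ * Nat.card (G₁ ⊓ (G₃ ⊓ G₄) : Subgroup G)) *
        (Nat.card G₂ * Nat.card (G₂ ⊓ (G₃ ⊓ G₄) : Subgroup G)) := Nat.mul_le_mul hA hB
    _ = Nat.card G₁ * Nat.card G₂ *
        (Nat.card (G₁ ⊓ (G₃ ⊓ G₄) : Subgroup G) * Nat.card (G₂ ⊓ (G₃ ⊓ G₄) : Subgroup G)) := by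
        ring
    _ ≤ Nat.card G₁ * Nat.card G₂ * Nat.card (G₃ ⊓ G₄ : Subgroup G) := Nat.mul_le_mul_left _ hC
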